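/- arXiv:2004.06469 — 2 statements merged into one kernel-verified Lean document; each statement's English description precedes it below -/
import Mathlib

section
/- Let f : 2^E × Φ → ℝ≥0 be adaptive monotone and adaptive submodular, and let π be any deterministic adaptive policy. Then for any step i ≥ 0, f_avg(π_{i+1}) − f_avg(π_i) ≤ E_Φ[max_e Δ(e | Ψ_i(π, Φ))], where π_i denotes the truncation of π to its first i selections, Ψ_i(π, φ) is the partial realization observed after π's first i selections under realization φ, and Δ(e | ψ) is the expected marginal benefit of item e conditioned on partial realization ψ. -/
open Finset
open scoped Classical

section Adaptive

variable {E O : Type*} [Fintype E] [Fintype O] [DecidableEq E] [Nonempty E]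

/-- A partial realization: a partial assignment of states to items. -/
abbrev PReal (E O : Type*) := E → Option O

/-- A (full) realization `φ` is consistent with a partial realization `ψ`
(written `φ ∼ ψ`) if `φ` agrees with `ψ` on the domain of `ψ`. -/
def consistentR (φ : E → O) (ψ : PReal E O) : Prop := ∀ e o, ψ e = some o → φ e = o

/-- The domain of a partial realization, i.e. the set of items already selected. -/
noncomputable def pdom (ψ : PReal E O) : Finset E :=
  Finset.univ.filter fun e => (ψ e).isSome

/-- The probability `Pr[Φ ∼ ψ]` that the random realization is consistent with `ψ`. -/
noncomputable def prMass (p : (E → O) → ℝ) (ψ : PReal E O) : ℝ :=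
  ∑ φ ∈ Finset.univ.filter (fun φ => consistentR φ ψ), p φ

/-- The conditional expected marginal benefit `Δ(e | ψ)` of item `e` given the
partial realization `ψ`. -/
noncomputable def marginal (p : (E → O) → ℝ) (f : Finset E → (E → O) → ℝ)
    (e : E) (ψ : PReal E O) : ℝ :=
  (∑ φ ∈ Finset.univ.filter (fun φ => consistentR φ ψ),
      p φ * (f (insert e (pdom ψ)) φ - f (pdom ψ) φ)) / prMass p ψ

/-- `max_e Δ(e | ψ)`, the best single-item conditional marginal benefit. -/
noncomputable def maxMarginal (p : (E → O) → ℝ) (f : Finset E → (E → O) → ℝ)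
    (ψ : PReal E O) : ℝ :=
  Finset.univ.sup' Finset.univ_nonempty (fun e => marginal p f e ψ)

/-- Adaptive monotonicity: `Δ(e | ψ) ≥ 0` for every `e` and every `ψ` with
`Pr[Φ ∼ ψ] > 0`. -/
def AdaptiveMonotone (p : (E → O) → ℝ) (f : Finset E → (E → O) → ℝ) : Prop :=
  ∀ ψ : PReal E O, 0 < prMass p ψ → ∀ e : E, 0 ≤ marginal p f e ψ

/-- `ψ` is a subrealization of `ψ'`. -/
def subreal (ψ ψ' : PReal E O) : Prop := ∀ e o, ψ e = some o → ψ' e = some o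

/-- Adaptive submodularity: `Δ(e | ψ) ≥ Δ(e | ψ')` whenever `ψ ⊆ ψ'` and
`e ∉ dom(ψ')`. -/
def AdaptiveSubmodular (p : (E → O) → ℝ) (f : Finset E → (E → O) → ℝ) : Prop :=
  ∀ ψ ψ' : PReal E O, subreal ψ ψ' → ∀ e ∉ pdom ψ', marginal p f e ψ' ≤ marginal p f e ψ

/-- A deterministic adaptive policy: picks the next item from the current
partial realization. -/
abbrev Policy (E O : Type*) := PReal E O → E

/-- `runP π φ i = Ψ_i(π, φ)`: the partial realization observed after policy `π`
selects its first `i` items under realization `φ`. -/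
noncomputable def runP (π : Policy E O) (φ : E → O) : ℕ → PReal E O
  | 0 => fun _ => none
  | (i + 1) =>
      Function.update (runP π φ i) (π (runP π φ i)) (some (φ (π (runP π φ i))))

/-- `favg p f π i = f_avg(π_i)`: the expected utility of the truncated policy `π_i`. -/
noncomputable def favg (p : (E → O) → ℝ) (f : Finset E → (E → O) → ℝ)
    (π : Policy E O) (i : ℕ) : ℝ :=
  ∑ φ : E → O, p φ * f (pdom (runP π φ i)) φ

lemma consistent_runP (π : Policy E O) (φ : E → O) (i : ℕ) :
    consistentR φ (runP π φ i) := by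
  induction i with
  | zero => intro e o h; simp [runP] at h
  | succ i ih =>
    intro e o h
    rw [runP, Function.update_apply] at h
    split_ifs at h with he
    · rw [he]; exact Option.some.inj h
    · exact ih e o h

lemma subreal_runP (π : Policy E O) (φ : E → O) (i : ℕ) :
    subreal (runP π φ i) (runP π φ (i + 1)) := by
  intro e o h
  rw [runP, Function.update_apply]
  split_ifs with he
  · rw [← he]
    exact congrArg some (consistent_runP π φ i e o h)
  · exact h

lemma runP_eq_of_consistent (π : Policy E O) (φ φ' : E → O) (i : ℕ)
    (h : consistentR φ' (runP π φ i)) : runP π φ' i = runP π φ i := by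
  induction i with
  | zero => rfl
  | succ i ih =>
    have h' : consistentR φ' (runP π φ i) := fun e o he => h e o (subreal_runP π φ i e o he)
    have hψ := ih h'
    have hmem : runP π φ (i + 1) (π (runP π φ i)) = some (φ (π (runP π φ i))) := by
      rw [runP]; exact Function.update_self _ _ _
    have he0 := h _ _ hmem
    rw [runP, runP, hψ, he0]

lemma pdom_update (ψ : PReal E O) (e : E) (x : O) :
    pdom (Function.update ψ e (some x)) = insert e (pdom ψ) := by
  ext a
  simp only [pdom, Finset.mem_filter, Finset.mem_univ, true_and, Finset.mem_insert,
    Function.update_apply]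
  by_cases h : a = e <;> simp [h]

end Adaptive

/-- (Lemma 1) For an adaptive monotone, adaptive submodular `f` and any deterministic
adaptive policy `π`, `f_avg(π_{i+1}) − f_avg(π_i) ≤ E_Φ[max_e Δ(e | Ψ_i(π, Φ))]`. -/
theorem favg_step_le_expected_max {E O : Type*} [Fintype E] [Fintype O] [DecidableEq E]
    [Nonempty E] (p : (E → O) → ℝ) (hp : ∀ φ, 0 ≤ p φ) (hp1 : ∑ φ : E → O, p φ = 1)
    (f : Finset E → (E → O) → ℝ) (hf : ∀ S φ, 0 ≤ f S φ)
    (hmono : AdaptiveMonotone p f) (hsub : AdaptiveSubmodular p f)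
    (π : Policy E O) (i : ℕ) :
    favg p f π (i + 1) - favg p f π i ≤
      ∑ φ : E → O, p φ * maxMarginal p f (runP π φ i) := by
  have hdiff : favg p f π (i + 1) - favg p f π i
      = ∑ φ : E → O,
          p φ * (f (insert (π (runP π φ i)) (pdom (runP π φ i))) φ - f (pdom (runP π φ i)) φ) := by
    rw [favg, favg, ← Finset.sum_sub_distrib]
    refine Finset.sum_congr rfl fun φ _ => ?_
    have : pdom (runP π φ (i + 1)) = insert (π (runP π φ i)) (pdom (runP π φ i)) := by
      rw [runP]; exact pdom_update _ _ _
    rw [this]; ring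
  rw [hdiff,
    ← Finset.sum_fiberwise Finset.univ (fun φ => runP π φ i)
      (fun φ => p φ * (f (insert (π (runP π φ i)) (pdom (runP π φ i))) φ
        - f (pdom (runP π φ i)) φ)),
    ← Finset.sum_fiberwise Finset.univ (fun φ => runP π φ i)
      (fun φ => p φ * maxMarginal p f (runP π φ i))]
  refine Finset.sum_le_sum fun ψ _ => ?_
  have hL : ∑ φ ∈ Finset.univ.filter (fun φ => runP π φ i = ψ),
        p φ * (f (insert (π (runP π φ i)) (pdom (runP π φ i))) φ - f (pdom (runP π φ i)) φ)
      = ∑ φ ∈ Finset.univ.filter (fun φ => runP π φ i = ψ),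
        p φ * (f (insert (π ψ) (pdom ψ)) φ - f (pdom ψ) φ) := by
    refine Finset.sum_congr rfl fun φ hφ => ?_
    simp only [Finset.mem_filter] at hφ
    rw [hφ.2]
  have hR : ∑ φ ∈ Finset.univ.filter (fun φ => runP π φ i = ψ),
        p φ * maxMarginal p f (runP π φ i)
      = ∑ φ ∈ Finset.univ.filter (fun φ => runP π φ i = ψ),
        p φ * maxMarginal p f ψ := by
    refine Finset.sum_congr rfl fun φ hφ => ?_
    simp only [Finset.mem_filter] at hφ
    rw [hφ.2]
  rw [hL, hR]
  rcases Finset.eq_empty_or_nonempty (Finset.univ.filter (fun φ => runP π φ i = ψ)) with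
    hE | ⟨φ0, hφ0⟩
  · simp [hE]
  · simp only [Finset.mem_filter, Finset.mem_univ, true_and] at hφ0
    have hfiber : Finset.univ.filter (fun φ => runP π φ i = ψ)
        = Finset.univ.filter (fun φ : E → O => consistentR φ ψ) := by
      ext φ
      simp only [Finset.mem_filter, Finset.mem_univ, true_and]
      constructor
      · rintro rfl; exact consistent_runP π φ i
      · intro hc
        rw [← hφ0] at hc ⊢
        exact runP_eq_of_consistent π φ0 φ i hc
    rw [hfiber]
    have hpr : prMass p ψ = ∑ φ ∈ Finset.univ.filter (fun φ : E → O => consistentR φ ψ), p φ :=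
      rfl
    have hpr0 : 0 ≤ prMass p ψ := Finset.sum_nonneg fun φ _ => hp φ
    rcases hpr0.lt_or_eq with hpos | h0
    · have hnum : ∑ φ ∈ Finset.univ.filter (fun φ : E → O => consistentR φ ψ),
          p φ * (f (insert (π ψ) (pdom ψ)) φ - f (pdom ψ) φ)
          = marginal p f (π ψ) ψ * prMass p ψ := by
        rw [marginal, div_mul_cancel₀]
        exact ne_of_gt hpos
      rw [hnum]
      have hmax : marginal p f (π ψ) ψ ≤ maxMarginal p f ψ := by
        rw [maxMarginal]; exact Finset.le_sup' (fun e => marginal p f e ψ) (Finset.mem_univ (π ψ))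
      calc marginal p f (π ψ) ψ * prMass p ψ
          ≤ maxMarginal p f ψ * prMass p ψ :=
            mul_le_mul_of_nonneg_right hmax hpos.le
        _ = ∑ φ ∈ Finset.univ.filter (fun φ : E → O => consistentR φ ψ),
            p φ * maxMarginal p f ψ := by
            rw [hpr, Finset.mul_sum]
            exact Finset.sum_congr rfl fun φ _ => mul_comm _ _
    · have hz : ∀ φ ∈ Finset.univ.filter (fun φ : E → O => consistentR φ ψ), p φ = 0 :=
        (Finset.sum_eq_zero_iff_of_nonneg fun φ _ => hp φ).mp (hpr ▸ h0.symm)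
      rw [Finset.sum_eq_zero fun φ hφ => by rw [hz φ hφ, zero_mul],
        Finset.sum_eq_zero fun φ hφ => by rw [hz φ hφ, zero_mul]]
end

section
/- Let R be a random reverse-reachable (RR) set of a directed graph G with n nodes under the independent cascade model. Then for any seed set S ⊆ V, E[I_G(S)] = n · Pr[R ∩ S ≠ ∅], where I_G(S) is the (random) number of nodes reachable from S in a random live-edge graph. -/
open scoped Classical

/-- Probability of the live-edge graph `g` under the IC model with edge probabilities `p`. -/
noncomputable def liveProb {V : Type*} [Fintype V] (p : V → V → ℝ) (g : V → V → Bool) : ℝ :=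
  ∏ u : V, ∏ v : V, (if g u v then p u v else 1 - p u v)

/-- `s` can reach `v` along live edges of `g`. -/
def reachB {V : Type*} (g : V → V → Bool) (s v : V) : Prop :=
  Relation.ReflTransGen (fun a b => g a b = true) s v

/-- `I_G(S)` in the live-edge graph `g`: the number of nodes reachable from `S`. -/
noncomputable def spread {V : Type*} [Fintype V] (g : V → V → Bool) (S : Finset V) : ℕ :=
  (Finset.univ.filter fun v => ∃ s ∈ S, reachB g s v).card

/-- `E[I_G(S)] = n · Pr[R ∩ S ≠ ∅]`, where `R` is a random RR-set obtained by picking a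
uniform random node `v` and taking the nodes that can reach `v` in an independent random
live-edge graph. -/
theorem expected_spread_eq_RR {V : Type*} [Fintype V] [DecidableEq V]
    (p : V → V → ℝ) (hp : ∀ u v, 0 ≤ p u v ∧ p u v ≤ 1) (S : Finset V) :
    ∑ g : V → V → Bool, liveProb p g * (spread g S : ℝ)
      = (Fintype.card V : ℝ) *
          ∑ v : V, (1 / (Fintype.card V : ℝ)) *
            ∑ g : V → V → Bool, liveProb p g * (if ∃ s ∈ S, reachB g s v then 1 else 0) := by
  have hspread : ∀ g : V → V → Bool, (spread g S : ℝ)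
      = ∑ v : V, (if ∃ s ∈ S, reachB g s v then (1:ℝ) else 0) := by
    intro g
    rw [spread, Finset.card_filter]
    push_cast
    rfl
  have hL : ∑ g : V → V → Bool, liveProb p g * (spread g S : ℝ)
      = ∑ v : V, ∑ g : V → V → Bool,
          liveProb p g * (if ∃ s ∈ S, reachB g s v then (1:ℝ) else 0) := by
    rw [Finset.sum_comm]
    refine Finset.sum_congr rfl fun g _ => ?_
    rw [hspread, Finset.mul_sum]
  rw [hL, Finset.mul_sum]
  refine Finset.sum_congr rfl fun v _ => ?_
  have hn : (Fintype.card V : ℝ) ≠ 0 := by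
    have : 0 < Fintype.card V := Fintype.card_pos_iff.mpr ⟨v⟩
    positivity
  field_simp
end
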